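/- Let q ≥ 2, r ≥ 1, and s ≥ 1 be integers. If f₁ : ℤ_q^r → ℤ_{2q} and f₂ : ℤ_q^s → ℤ_{2q} are 2q-negabent, then their direct sum f : ℤ_q^{r+s} → ℤ_{2q}, defined by f(x, y) = f₁(x) + f₂(y) for x ∈ ℤ_q^r, y ∈ ℤ_q^s (addition in ℤ_{2q}), is 2q-negabent. -/

import Mathlib

open Finset

/-- `ω = e^{πi/q}`, a primitive `2q`-th root of unity. -/
noncomputable def omg (q : ℕ) : ℂ := Complex.exp ((Real.pi : ℂ) * Complex.I / q)

/-- `ξ = e^{2πi/q}`, a primitive `q`-th root of unity. -/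
noncomputable def xiq (q : ℕ) : ℂ := Complex.exp (2 * (Real.pi : ℂ) * Complex.I / q)

/-- The `2q`-nega-Hadamard transform of `f : ℤ_q^n → ℤ_{2q}` at `u ∈ ℤ_q^n`:
`N_f(u) = q^{-n/2} Σ_x ω^{f(x)} ξ^{⟨x̂,û⟩} ω^{Σ_i x̂_i}`. -/
noncomputable def NHT (q n : ℕ) [NeZero q] (f : (Fin n → ZMod q) → ZMod (2 * q))
    (u : Fin n → ZMod q) : ℂ :=
  (Real.sqrt ((q : ℝ) ^ n) : ℂ)⁻¹ *
    ∑ x : Fin n → ZMod q,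
      omg q ^ (f x).val * xiq q ^ (∑ i, (x i).val * (u i).val) * omg q ^ (∑ i, (x i).val)

/-- The `2q`-nega-crosscorrelation of `f, g : ℤ_q^m → ℤ_{2q}` at `u`:
`C_{f,g}(u) = Σ_x ω^{f(x) − g(x+u)} (−1)^{n_q(x̂,û)}`. -/
noncomputable def negaCC (q m : ℕ) [NeZero q]
    (f g : (Fin m → ZMod q) → ZMod (2 * q)) (u : Fin m → ZMod q) : ℂ :=
  ∑ x : Fin m → ZMod q,
    omg q ^ (f x - g (x + u)).val *
      (-1 : ℂ) ^ (Finset.univ.filter (fun i => q ≤ (x i).val + (u i).val)).card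


lemma omg_pow_two_q (q : ℕ) [NeZero q] : omg q ^ (2*q) = 1 := by
  have hq : (q:ℂ) ≠ 0 := Nat.cast_ne_zero.mpr (NeZero.ne q)
  rw [omg, ← Complex.exp_nat_mul]
  rw [show ((2*q : ℕ):ℂ) * ((Real.pi : ℂ) * Complex.I / q) = 2 * Real.pi * Complex.I by
    push_cast; field_simp]
  exact Complex.exp_two_pi_mul_I

lemma NHT_directSum (q r s : ℕ) [NeZero q]
    (f₁ : (Fin r → ZMod q) → ZMod (2 * q)) (f₂ : (Fin s → ZMod q) → ZMod (2 * q))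
    (u : Fin (r + s) → ZMod q) :
    NHT q (r + s)
      (fun x => f₁ (fun i => x (Fin.castAdd s i)) + f₂ (fun j => x (Fin.natAdd r j))) u
    = NHT q r f₁ (fun i => u (Fin.castAdd s i)) * NHT q s f₂ (fun j => u (Fin.natAdd r j)) := by
  haveI : NeZero (2*q) := ⟨mul_ne_zero two_ne_zero (NeZero.ne q)⟩
  have hω : omg q ^ (2*q) = 1 := omg_pow_two_q q
  classical
  let e : ((Fin r → ZMod q) × (Fin s → ZMod q)) ≃ (Fin (r+s) → ZMod q) :=
    (Equiv.sumArrowEquivProdArrow _ _ _).symm.trans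
      (Equiv.arrowCongr finSumFinEquiv (Equiv.refl _))
  have he1 : ∀ (a : Fin r → ZMod q) (b : Fin s → ZMod q) (i : Fin r),
      e (a, b) (Fin.castAdd s i) = a i := by
    intro a b i
    simp [e, Equiv.arrowCongr, Equiv.sumArrowEquivProdArrow]
  have he2 : ∀ (a : Fin r → ZMod q) (b : Fin s → ZMod q) (j : Fin s),
      e (a, b) (Fin.natAdd r j) = b j := by
    intro a b j
    simp [e, Equiv.arrowCongr, Equiv.sumArrowEquivProdArrow]
  unfold NHT
  rw [show (Real.sqrt ((q : ℝ) ^ (r+s)) : ℂ)⁻¹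
      = (Real.sqrt ((q : ℝ) ^ r) : ℂ)⁻¹ * (Real.sqrt ((q : ℝ) ^ s) : ℂ)⁻¹ by
    rw [pow_add, Real.sqrt_mul (by positivity)]
    push_cast
    rw [mul_inv]]
  rw [← (Equiv.sum_comp e (fun x => omg q ^ ((f₁ (fun i => x (Fin.castAdd s i)) +
        f₂ (fun j => x (Fin.natAdd r j))).val)
      * xiq q ^ (∑ i, (x i).val * (u i).val) * omg q ^ (∑ i, (x i).val)))]
  rw [Fintype.sum_prod_type]
  have key : ∀ (a : Fin r → ZMod q) (b : Fin s → ZMod q),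
      omg q ^ ((f₁ (fun i => e (a,b) (Fin.castAdd s i)) +
          f₂ (fun j => e (a,b) (Fin.natAdd r j))).val)
        * xiq q ^ (∑ i, ((e (a,b)) i).val * (u i).val)
        * omg q ^ (∑ i, ((e (a,b)) i).val)
      = (omg q ^ (f₁ a).val * xiq q ^ (∑ i, (a i).val * (u (Fin.castAdd s i)).val)
          * omg q ^ (∑ i, (a i).val)) *
        (omg q ^ (f₂ b).val * xiq q ^ (∑ j, (b j).val * (u (Fin.natAdd r j)).val)
          * omg q ^ (∑ j, (b j).val)) := by
    intro a b
    have h1 : (fun i => e (a,b) (Fin.castAdd s i)) = a := funext (he1 a b)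
    have h2 : (fun j => e (a,b) (Fin.natAdd r j)) = b := funext (he2 a b)
    rw [h1, h2]
    rw [Fin.sum_univ_add (f := fun i => ((e (a,b)) i).val * (u i).val)]
    rw [Fin.sum_univ_add (f := fun i => ((e (a,b)) i).val)]
    simp only [he1 a b, he2 a b]
    rw [ZMod.val_add, ← pow_eq_pow_mod _ hω, pow_add, pow_add, pow_add]
    ring
  simp only [key]
  rw [← Finset.sum_mul_sum]
  ring

/-- The direct sum `f(x,y) = f₁(x) + f₂(y)` of two `2q`-negabent functions
`f₁ : ℤ_q^r → ℤ_{2q}` and `f₂ : ℤ_q^s → ℤ_{2q}` is `2q`-negabent. -/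
theorem directSum_negabent (q r s : ℕ) [NeZero q] (hq : 2 ≤ q) (hr : 1 ≤ r) (hs : 1 ≤ s)
    (f₁ : (Fin r → ZMod q) → ZMod (2 * q)) (f₂ : (Fin s → ZMod q) → ZMod (2 * q))
    (h₁ : ∀ u : Fin r → ZMod q, ‖NHT q r f₁ u‖ = 1)
    (h₂ : ∀ u : Fin s → ZMod q, ‖NHT q s f₂ u‖ = 1) :
    ∀ u : Fin (r + s) → ZMod q,
      ‖NHT q (r + s)
        (fun x => f₁ (fun i => x (Fin.castAdd s i)) + f₂ (fun j => x (Fin.natAdd r j))) u‖ = 1 := by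
  intro u
  rw [NHT_directSum q r s f₁ f₂ u, norm_mul]
  rw [h₁ _, h₂ _, mul_one]
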